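/- Let A ∈ ℝ^{m×n}, S ∈ ℝ^{m×s}, and define Z = S (S^T A A^T S)^† S^T, where † denotes the Moore–Penrose pseudoinverse. Then Z A A^T Z = Z; consequently, for the stochastic convex quadratic h(x) = ½ (Ax − b)^T Z (Ax − b) with gradient ∇h(x) = A^T Z (Ax − b), one has h(x) = ½ ‖∇h(x)‖₂² for all x ∈ ℝⁿ, and if b = A x̂ then additionally h(x) = ½ ⟨∇h(x), x − x̂⟩. -/
import Mathlib


open Matrix Finset

noncomputable section

/-- Euclidean dot product of two vectors. -/
def dot {n : ℕ} (x y : Fin n → ℝ) : ℝ := ∑ j, x j * y j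

/-- Squared Euclidean norm of a vector. -/
def norm2Sq {n : ℕ} (x : Fin n → ℝ) : ℝ := ∑ j, x j ^ 2

/-- ℓ¹ norm of a vector. -/
def l1Norm {n : ℕ} (x : Fin n → ℝ) : ℝ := ∑ j, |x j|

/-- Squared Euclidean norm of the i-th row of a matrix. -/
def rowNormSq {m n : ℕ} (A : Matrix (Fin m) (Fin n) ℝ) (i : Fin m) : ℝ := ∑ j, A i j ^ 2

/-- Squared Frobenius norm of a matrix. -/
def frobSq {m n : ℕ} (A : Matrix (Fin m) (Fin n) ℝ) : ℝ := ∑ i, ∑ j, A i j ^ 2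

/-- Largest singular value (spectral norm) of a matrix:  sup over `x ≠ 0` of `‖Ax‖₂/‖x‖₂`. -/
def sigmaMax {m n : ℕ} (A : Matrix (Fin m) (Fin n) ℝ) : ℝ :=
  sSup {t : ℝ | ∃ x : Fin n → ℝ, x ≠ 0 ∧
    t = Real.sqrt (norm2Sq (A.mulVec x)) / Real.sqrt (norm2Sq x)}

/-- `σ̃_min(A)`: the minimum over nonzero column-submatrices `A_J` of the smallest
singular value `σ_min(A_J) = min_{x ≠ 0, supp x ⊆ J} ‖Ax‖₂/‖x‖₂`. -/
def sigmaTildeMin {m n : ℕ} (A : Matrix (Fin m) (Fin n) ℝ) : ℝ :=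
  sInf {t : ℝ | ∃ J : Finset (Fin n), (∃ i j, j ∈ J ∧ A i j ≠ 0) ∧
    ∃ x : Fin n → ℝ, x ≠ 0 ∧ (∀ j ∉ J, x j = 0) ∧
      t = Real.sqrt (norm2Sq (A.mulVec x)) / Real.sqrt (norm2Sq x)}

/-- `|x|_min`: the smallest absolute value of the nonzero entries of `x`. -/
def minAbs {n : ℕ} (x : Fin n → ℝ) : ℝ := sInf {t : ℝ | ∃ j, x j ≠ 0 ∧ t = |x j|}

/-- Componentwise soft shrinkage operator `S_λ(x) = max{|x| - λ, 0}·sign(x)`. -/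
def softShrink {n : ℕ} (lam : ℝ) (x : Fin n → ℝ) : Fin n → ℝ :=
  fun j => Real.sign (x j) * max (|x j| - lam) 0

/-- The objective `f(x) = λ‖x‖₁ + ½‖x‖₂²`. -/
def fObj {n : ℕ} (lam : ℝ) (x : Fin n → ℝ) : ℝ := lam * l1Norm x + norm2Sq x / 2

/-- `g` is a subgradient of `f` at `x`. -/
def IsSubgrad {n : ℕ} (f : (Fin n → ℝ) → ℝ) (x g : Fin n → ℝ) : Prop :=
  ∀ y, f x + dot g (y - x) ≤ f y

/-- Bregman distance `D_f^{x*}(x, y) = f(y) - f(x) - ⟨x*, y - x⟩`. -/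
def breg {n : ℕ} (f : (Fin n → ℝ) → ℝ) (xstar x y : Fin n → ℝ) : ℝ :=
  f y - f x - dot xstar (y - x)

/-- `X` is the Moore–Penrose pseudoinverse of `B` (Penrose equations). -/
def IsMoorePenrose {s : ℕ} (B X : Matrix (Fin s) (Fin s) ℝ) : Prop :=
  B * X * B = B ∧ X * B * X = X ∧ (B * X)ᵀ = B * X ∧ (X * B)ᵀ = X * B


/-- Uniqueness of the Moore–Penrose pseudoinverse. -/
lemma mp_unique' {s : ℕ} (B X Y : Matrix (Fin s) (Fin s) ℝ)
    (hX : IsMoorePenrose B X) (hY : IsMoorePenrose B Y) : X = Y := by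
  obtain ⟨a1, a2, a3, a4⟩ := hX
  obtain ⟨b1, b2, b3, b4⟩ := hY
  have hBt : Bᵀ = Bᵀ * (B * Y) := by
    calc Bᵀ = (B * Y * B)ᵀ := by rw [b1]
    _ = Bᵀ * (B * Y)ᵀ := by rw [Matrix.transpose_mul]
    _ = Bᵀ * (B * Y) := by rw [b3]
  have hBt2 : Bᵀ = (Y * B) * Bᵀ := by
    calc Bᵀ = (B * (Y * B))ᵀ := by rw [← Matrix.mul_assoc, b1]
    _ = (Y * B)ᵀ * Bᵀ := by rw [Matrix.transpose_mul]
    _ = (Y * B) * Bᵀ := by rw [b4]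
  have hBX : B * X = B * Y := by
    calc B * X = (B * X)ᵀ := a3.symm
    _ = Xᵀ * Bᵀ := by rw [Matrix.transpose_mul]
    _ = Xᵀ * (Bᵀ * (B * Y)) := by rw [← hBt]
    _ = (Xᵀ * Bᵀ) * (B * Y) := by rw [Matrix.mul_assoc]
    _ = (B * X)ᵀ * (B * Y) := by rw [Matrix.transpose_mul]
    _ = (B * X) * (B * Y) := by rw [a3]
    _ = (B * X * B) * Y := by simp only [Matrix.mul_assoc]
    _ = B * Y := by rw [a1]
  have hXB : X * B = Y * B := by
    calc X * B = (X * B)ᵀ := a4.symm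
    _ = Bᵀ * Xᵀ := by rw [Matrix.transpose_mul]
    _ = ((Y * B) * Bᵀ) * Xᵀ := by rw [← hBt2]
    _ = (Y * B) * (Bᵀ * Xᵀ) := by rw [Matrix.mul_assoc]
    _ = (Y * B) * (X * B)ᵀ := by rw [← Matrix.transpose_mul]
    _ = (Y * B) * (X * B) := by rw [a4]
    _ = Y * (B * X * B) := by simp only [Matrix.mul_assoc]
    _ = Y * B := by rw [a1]
  calc X = X * B * X := a2.symm
  _ = X * (B * X) := by rw [Matrix.mul_assoc]
  _ = X * (B * Y) := by rw [hBX]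
  _ = (X * B) * Y := by rw [← Matrix.mul_assoc]
  _ = (Y * B) * Y := by rw [hXB]
  _ = Y := b2

/-- If `B` is symmetric and `X` is its MP pseudoinverse, so is `Xᵀ`. -/
lemma mp_transpose' {s : ℕ} (B X : Matrix (Fin s) (Fin s) ℝ) (hB : Bᵀ = B)
    (hX : IsMoorePenrose B X) : IsMoorePenrose B Xᵀ := by
  obtain ⟨a1, a2, a3, a4⟩ := hX
  refine ⟨?_, ?_, ?_, ?_⟩
  · calc B * Xᵀ * B = (Bᵀ * X * Bᵀ)ᵀ := by simp [Matrix.transpose_mul, Matrix.mul_assoc]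
    _ = B := by rw [hB, a1, hB]
  · calc Xᵀ * B * Xᵀ = (X * Bᵀ * X)ᵀ := by simp [Matrix.transpose_mul, Matrix.mul_assoc]
    _ = Xᵀ := by rw [hB, a2]
  · calc (B * Xᵀ)ᵀ = X * Bᵀ := by simp [Matrix.transpose_mul]
    _ = X * B := by rw [hB]
    _ = (X * B)ᵀ := a4.symm
    _ = Bᵀ * Xᵀ := by rw [Matrix.transpose_mul]
    _ = B * Xᵀ := by rw [hB]
  · calc (Xᵀ * B)ᵀ = Bᵀ * X := by simp [Matrix.transpose_mul]
    _ = B * X := by rw [hB]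
    _ = (B * X)ᵀ := a3.symm
    _ = Xᵀ * Bᵀ := by rw [Matrix.transpose_mul]
    _ = Xᵀ * B := by rw [hB]

lemma dot_eq_dotProduct {n : ℕ} (x y : Fin n → ℝ) : dot x y = x ⬝ᵥ y := rfl

lemma norm2Sq_eq_dotProduct {n : ℕ} (x : Fin n → ℝ) : norm2Sq x = x ⬝ᵥ x := by
  simp [norm2Sq, dotProduct, sq]

lemma mulVec_dot' {p q : ℕ} (M : Matrix (Fin p) (Fin q) ℝ) (u : Fin q → ℝ)
    (w : Fin p → ℝ) : (M *ᵥ u) ⬝ᵥ w = u ⬝ᵥ (Mᵀ *ᵥ w) := by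
  rw [dotProduct_comm, dotProduct_mulVec, ← Matrix.mulVec_transpose, dotProduct_comm]

/-- For `Z = S (Sᵀ A Aᵀ S)† Sᵀ` one has `Z A Aᵀ Z = Z`; consequently the
sketched quadratic `h(x) = ½(Ax − b)ᵀ Z (Ax − b)` with gradient `∇h(x) = Aᵀ Z (Ax − b)`
satisfies `h(x) = ½‖∇h(x)‖₂²`, and if `b = A x̂` then also `h(x) = ½⟨∇h(x), x − x̂⟩`. -/
theorem sketch_and_project_quadratic {m n s : ℕ}
    (A : Matrix (Fin m) (Fin n) ℝ) (S : Matrix (Fin m) (Fin s) ℝ) (b : Fin m → ℝ)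
    (X : Matrix (Fin s) (Fin s) ℝ) (hX : IsMoorePenrose (Sᵀ * A * Aᵀ * S) X) :
    let Z : Matrix (Fin m) (Fin m) ℝ := S * X * Sᵀ
    Z * A * Aᵀ * Z = Z ∧
    (∀ x : Fin n → ℝ,
        1 / 2 * dot (A.mulVec x - b) (Z.mulVec (A.mulVec x - b))
          = 1 / 2 * norm2Sq (Aᵀ.mulVec (Z.mulVec (A.mulVec x - b)))) ∧
    (∀ xhat : Fin n → ℝ, b = A.mulVec xhat →
      ∀ x : Fin n → ℝ,
        1 / 2 * dot (A.mulVec x - b) (Z.mulVec (A.mulVec x - b))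
          = 1 / 2 * dot (Aᵀ.mulVec (Z.mulVec (A.mulVec x - b))) (x - xhat)) := by
  intro Z
  set B : Matrix (Fin s) (Fin s) ℝ := Sᵀ * A * Aᵀ * S with hBdef
  have hB : Bᵀ = B := by
    simp [hBdef, Matrix.transpose_mul, Matrix.mul_assoc]
  have hXsym : Xᵀ = X := mp_unique' B Xᵀ X (mp_transpose' B X hB hX) hX
  have hZsym : Zᵀ = Z := by
    show (S * X * Sᵀ)ᵀ = S * X * Sᵀ
    calc (S * X * Sᵀ)ᵀ = S * Xᵀ * Sᵀ := by simp [Matrix.transpose_mul, Matrix.mul_assoc]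
    _ = S * X * Sᵀ := by rw [hXsym]
  have hZ : Z * A * Aᵀ * Z = Z := by
    show (S * X * Sᵀ) * A * Aᵀ * (S * X * Sᵀ) = S * X * Sᵀ
    calc (S * X * Sᵀ) * A * Aᵀ * (S * X * Sᵀ)
        = S * (X * (Sᵀ * A * Aᵀ * S) * X) * Sᵀ := by simp only [Matrix.mul_assoc]
    _ = S * X * Sᵀ := by rw [hX.2.1, Matrix.mul_assoc]
  have key : (Aᵀ * Z)ᵀ * (Aᵀ * Z) = Z := by
    rw [Matrix.transpose_mul, Matrix.transpose_transpose, hZsym]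
    calc Z * A * (Aᵀ * Z) = Z * A * Aᵀ * Z := by simp only [Matrix.mul_assoc]
    _ = Z := hZ
  have main : ∀ r : Fin m → ℝ, r ⬝ᵥ (Z *ᵥ r) = norm2Sq (Aᵀ *ᵥ (Z *ᵥ r)) := by
    intro r
    rw [norm2Sq_eq_dotProduct, Matrix.mulVec_mulVec, mulVec_dot',
      Matrix.mulVec_mulVec, key]
  refine ⟨hZ, ?_, ?_⟩
  · intro x
    rw [dot_eq_dotProduct, main]
  · intro xhat hb x
    have hr : A *ᵥ x - b = A *ᵥ (x - xhat) := by rw [hb, Matrix.mulVec_sub]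
    rw [dot_eq_dotProduct, dot_eq_dotProduct]
    congr 1
    set r : Fin m → ℝ := A *ᵥ x - b with hrdef
    calc r ⬝ᵥ (Z *ᵥ r) = (Z *ᵥ r) ⬝ᵥ r := dotProduct_comm _ _
    _ = (Z *ᵥ r) ⬝ᵥ (A *ᵥ (x - xhat)) := by rw [← hr]
    _ = ((A *ᵥ (x - xhat)) ⬝ᵥ (Z *ᵥ r)) := dotProduct_comm _ _
    _ = (x - xhat) ⬝ᵥ (Aᵀ *ᵥ (Z *ᵥ r)) := mulVec_dot' _ _ _
    _ = (Aᵀ *ᵥ (Z *ᵥ r)) ⬝ᵥ (x - xhat) := dotProduct_comm _ _
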